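/- In the Face Lemma setup (p₁, p₂ ∈ ℂⁿ linearly independent column vectors; q₁†, q₂† linearly independent row vectors; qᵢ†pⱼ ≠ 0 for i,j ∈ {1,2}; nonzero α₁, α₂, β₁, β₂ ∈ ℂ with α₁+α₂ ≠ 0, β₁+β₂ ≠ 0, α₁+β₁ ≠ 0; D := α₁β₂(q₂†p₁)(q₁†p₂) − α₂β₁(q₁†p₁)(q₂†p₂) ≠ 0; κ := α₁+α₂+β₁+β₂), define P₁ = (α₁·p₁/(q₁†p₁) + α₂·p₂/(q₁†p₂))/(α₁+α₂), P₂ = (β₁·p₁/(q₂†p₁) + β₂·p₂/(q₂†p₂))/(β₁+β₂), Q₁† = (α₁·q₁†/(q₁†p₁) + β₁·q₂†/(q₂†p₁))/(α₁+β₁), and set α₄ = −β₂ + κ·α₁β₂(q₂†p₁)(q₁†p₂)/D, β₄ = −α₂ − κ·α₂β₁(q₁†p₁)(q₂†p₂)/D, γ₁ = −(α₁+β₁). If Q₁†·P₁ ≠ 0 and Q₁†·P₂ ≠ 0, then Q₁†·p₁ = 1 and α₄·P₁/(Q₁†P₁) + β₄·P₂/(Q₁†P₂) + γ₁·p₁ =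 0; moreover α₄ + β₄ = α₁ + β₁. -/

import Mathlib

set_option maxHeartbeats 1000000


open Matrix

/-- Face Lemma, triple condition at the node `Q₁†`: with `α₄`, `β₄`, `γ₁` as
computed, `(P₁, P₂, p₁)` form a `Q₁†`-based triple with parameters
`(α₄, β₄, γ₁)`, and `α₄ + β₄ = α₁ + β₁`. -/
theorem face_lemma_node_Q₁ (n : ℕ) (p₁ p₂ q₁ q₂ : Fin n → ℂ)
    (hp : LinearIndependent ℂ ![p₁, p₂]) (hq : LinearIndependent ℂ ![q₁, q₂])
    (h11 : q₁ ⬝ᵥ p₁ ≠ 0) (h12 : q₁ ⬝ᵥ p₂ ≠ 0)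
    (h21 : q₂ ⬝ᵥ p₁ ≠ 0) (h22 : q₂ ⬝ᵥ p₂ ≠ 0)
    (α₁ α₂ β₁ β₂ : ℂ) (ha₁ : α₁ ≠ 0) (ha₂ : α₂ ≠ 0) (hb₁ : β₁ ≠ 0) (hb₂ : β₂ ≠ 0)
    (hαα : α₁ + α₂ ≠ 0) (hββ : β₁ + β₂ ≠ 0) (hαβ : α₁ + β₁ ≠ 0)
    (D κ : ℂ)
    (hD : D = α₁ * β₂ * (q₂ ⬝ᵥ p₁) * (q₁ ⬝ᵥ p₂) -
        α₂ * β₁ * (q₁ ⬝ᵥ p₁) * (q₂ ⬝ᵥ p₂))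
    (hD0 : D ≠ 0)
    (hκ : κ = α₁ + α₂ + β₁ + β₂)
    (P₁ P₂ Q₁ : Fin n → ℂ)
    (hP₁ : P₁ = (α₁ + α₂)⁻¹ •
        (α₁ • ((q₁ ⬝ᵥ p₁)⁻¹ • p₁) + α₂ • ((q₁ ⬝ᵥ p₂)⁻¹ • p₂)))
    (hP₂ : P₂ = (β₁ + β₂)⁻¹ •
        (β₁ • ((q₂ ⬝ᵥ p₁)⁻¹ • p₁) + β₂ • ((q₂ ⬝ᵥ p₂)⁻¹ • p₂)))
    (hQ₁ : Q₁ = (α₁ + β₁)⁻¹ •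
        (α₁ • ((q₁ ⬝ᵥ p₁)⁻¹ • q₁) + β₁ • ((q₂ ⬝ᵥ p₁)⁻¹ • q₂)))
    (α₄ β₄ γ₁ : ℂ)
    (hα₄ : α₄ = -β₂ + κ * (α₁ * β₂ * (q₂ ⬝ᵥ p₁) * (q₁ ⬝ᵥ p₂)) / D)
    (hβ₄ : β₄ = -α₂ - κ * (α₂ * β₁ * (q₁ ⬝ᵥ p₁) * (q₂ ⬝ᵥ p₂)) / D)
    (hγ₁ : γ₁ = -(α₁ + β₁))
    (hQP₁ : Q₁ ⬝ᵥ P₁ ≠ 0) (hQP₂ : Q₁ ⬝ᵥ P₂ ≠ 0) :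
    Q₁ ⬝ᵥ p₁ = 1 ∧
    α₄ • ((Q₁ ⬝ᵥ P₁)⁻¹ • P₁) + β₄ • ((Q₁ ⬝ᵥ P₂)⁻¹ • P₂) + γ₁ • p₁ = 0 ∧
    α₄ + β₄ = α₁ + β₁ := by
  have hs₁ : Q₁ ⬝ᵥ P₁ =
      (α₁ * (α₁ + α₂ + β₁) * (q₁ ⬝ᵥ p₂) * (q₂ ⬝ᵥ p₁) +
        α₂ * β₁ * (q₁ ⬝ᵥ p₁) * (q₂ ⬝ᵥ p₂)) /
      ((α₁ + β₁) * (α₁ + α₂) * ((q₁ ⬝ᵥ p₁) * (q₁ ⬝ᵥ p₂) * (q₂ ⬝ᵥ p₁))) := by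
    rw [hP₁, hQ₁, eq_div_iff (by
      exact mul_ne_zero (mul_ne_zero hαβ hαα)
        (mul_ne_zero (mul_ne_zero h11 h12) h21))]
    simp only [smul_dotProduct, dotProduct_smul, add_dotProduct, dotProduct_add,
      smul_eq_mul]
    field_simp
    ring
  have hs₂ : Q₁ ⬝ᵥ P₂ =
      (β₁ * (α₁ + β₁ + β₂) * (q₁ ⬝ᵥ p₁) * (q₂ ⬝ᵥ p₂) +
        α₁ * β₂ * (q₁ ⬝ᵥ p₂) * (q₂ ⬝ᵥ p₁)) /
      ((α₁ + β₁) * (β₁ + β₂) * ((q₁ ⬝ᵥ p₁) * (q₂ ⬝ᵥ p₁) * (q₂ ⬝ᵥ p₂))) := by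
    rw [hP₂, hQ₁, eq_div_iff (by
      exact mul_ne_zero (mul_ne_zero hαβ hββ)
        (mul_ne_zero (mul_ne_zero h11 h21) h22))]
    simp only [smul_dotProduct, dotProduct_smul, add_dotProduct, dotProduct_add,
      smul_eq_mul]
    field_simp
    ring
  have hN₁ : α₁ * (α₁ + α₂ + β₁) * (q₁ ⬝ᵥ p₂) * (q₂ ⬝ᵥ p₁) +
      α₂ * β₁ * (q₁ ⬝ᵥ p₁) * (q₂ ⬝ᵥ p₂) ≠ 0 := by
    intro h; exact hQP₁ (by rw [hs₁, h, zero_div])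
  have hN₂ : β₁ * (α₁ + β₁ + β₂) * (q₁ ⬝ᵥ p₁) * (q₂ ⬝ᵥ p₂) +
      α₁ * β₂ * (q₁ ⬝ᵥ p₂) * (q₂ ⬝ᵥ p₁) ≠ 0 := by
    intro h; exact hQP₂ (by rw [hs₂, h, zero_div])
  have hD0' : α₁ * β₂ * (q₂ ⬝ᵥ p₁) * (q₁ ⬝ᵥ p₂) -
      α₂ * β₁ * (q₁ ⬝ᵥ p₁) * (q₂ ⬝ᵥ p₂) ≠ 0 := hD ▸ hD0
  refine ⟨?_, ?_, ?_⟩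
  · rw [hQ₁]
    simp only [smul_dotProduct, add_dotProduct, smul_eq_mul]
    field_simp
  · set N1 := α₁ * (α₁ + α₂ + β₁) * (q₁ ⬝ᵥ p₂) * (q₂ ⬝ᵥ p₁) +
      α₂ * β₁ * (q₁ ⬝ᵥ p₁) * (q₂ ⬝ᵥ p₂) with hN1
    set N2 := β₁ * (α₁ + β₁ + β₂) * (q₁ ⬝ᵥ p₁) * (q₂ ⬝ᵥ p₂) +
      α₁ * β₂ * (q₁ ⬝ᵥ p₂) * (q₂ ⬝ᵥ p₁) with hN2
    clear_value N1 N2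
    funext i
    rw [hs₁, hs₂, hα₄, hβ₄, hγ₁, hP₁, hP₂]
    simp only [Pi.add_apply, Pi.smul_apply, Pi.zero_apply, smul_eq_mul, inv_div]
    field_simp
    have hB : D * (N1 * ((α₁ + α₂) * (q₁ ⬝ᵥ p₁ * q₁ ⬝ᵥ p₂))) ≠ 0 := by
      apply_rules [mul_ne_zero]
    have hE : D * (N2 * ((β₁ + β₂) * (q₂ ⬝ᵥ p₁ * q₂ ⬝ᵥ p₂))) ≠ 0 := by
      apply_rules [mul_ne_zero]
    rw [hN1, hN2, hD, hκ]
    ring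
  · have h3 : κ * (α₁ * β₂ * (q₂ ⬝ᵥ p₁) * (q₁ ⬝ᵥ p₂)) / D -
        κ * (α₂ * β₁ * (q₁ ⬝ᵥ p₁) * (q₂ ⬝ᵥ p₂)) / D = κ := by
      rw [div_sub_div_same, ← mul_sub, ← hD, mul_div_assoc, div_self hD0, mul_one]
    rw [hα₄, hβ₄]
    linear_combination h3 + hκ
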